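/- arXiv:1108.5747 — 2 statements merged into one kernel-verified Lean document; each statement's English description precedes it below -/
import Mathlib

section
/- Let A be a filter space with accumulation point a which is not finitely generated, and let α be the tightness of A (which is then an infinite cardinal). If X belongs to CH({A}), then for every subset M ⊆ X the iterated A-closure M_{α⁺} (where α⁺ is the successor cardinal of α) equals the closure of M in X. -/
universe u v

/-- A class of topological spaces (in universe `u`): a predicate on spaces. -/
abbrev TopClass : Type (u + 1) := (X : Type u) → TopologicalSpace X → Prop

/-- A class of topological spaces is coreflective if it is closed under the formation of
topological sums and quotient spaces. -/
def IsCoreflective (C : TopClass.{u}) : Prop :=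
  (∀ (ι : Type u) (X : ι → Type u) (t : (i : ι) → TopologicalSpace (X i)),
      (∀ i, C (X i) (t i)) → C ((i : ι) × X i) (@instTopologicalSpaceSigma ι X t)) ∧
  (∀ (X Y : Type u) (tX : TopologicalSpace X) (tY : TopologicalSpace Y) (f : X → Y),
      @Topology.IsQuotientMap X Y tX tY f → C X tX → C Y tY)

/-- The coreflective hull of a class of spaces: the smallest coreflective class containing it. -/
def CH (A : TopClass.{u}) : TopClass.{u} :=
  fun X tX => ∀ C : TopClass.{u}, IsCoreflective C → (∀ Y tY, A Y tY → C Y tY) → C X tX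

/-- `SCH A` is the class of all subspaces of members of `CH A`. -/
def SCH (A : TopClass.{u}) : TopClass.{u} :=
  fun X tX => ∃ (Y : Type u) (tY : TopologicalSpace Y) (f : X → Y),
    CH A Y tY ∧ @Topology.IsEmbedding X Y tX tY f

/-- The class consisting of (the spaces homeomorphic to) a single space `A`. -/
def singleClass (A : Type u) (tA : TopologicalSpace A) : TopClass.{u} :=
  fun Y tY => Nonempty (@Homeomorph Y A tY tA)

/-- A class of topological spaces is hereditary if it is closed under subspaces. -/
def IsHereditary (C : TopClass.{u}) : Prop :=
  ∀ (X : Type u) (tX : TopologicalSpace X), C X tX →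
    ∀ (Z : Type u) (tZ : TopologicalSpace Z) (f : Z → X), @Topology.IsEmbedding Z X tZ tX f →
      C Z tZ

/-- The class `FG` of finitely generated (Alexandrov-discrete) topological spaces. -/
def FGClass : TopClass.{u} := fun X tX => @AlexandrovDiscrete X tX

/-- A filter space: a topological space with precisely one accumulation (non-isolated) point,
namely `a`. -/
def IsFilterSpace (X : Type u) [TopologicalSpace X] (a : X) : Prop :=
  ¬ IsOpen ({a} : Set X) ∧ ∀ x : X, x ≠ a → IsOpen ({x} : Set X)

/-- A filter subspace of a filter space `A` with accumulation point `a`: a subset containing `a`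
such that `a` is in the closure of `B \ {a}`. -/
def IsFilterSubspace (A : Type u) [TopologicalSpace A] (a : A) (B : Set A) : Prop :=
  a ∈ B ∧ a ∈ closure (B \ {a})

/-- The `A`-closure of `M ⊆ X`: points reachable as `f a` for a continuous map `f : B → X`
from a filter subspace `B` of `A` sending `B \ {a}` into `M`. -/
def AClosureStep (A : Type u) [TopologicalSpace A] (a : A) {X : Type u} [TopologicalSpace X]
    (M : Set X) : Set X :=
  {x | ∃ (B : Set A) (hB : IsFilterSubspace A a B) (f : B → X),
    Continuous f ∧ (∀ b : B, (b : A) ≠ a → f b ∈ M) ∧ f ⟨a, hB.1⟩ = x}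

/-- The `β`-th iterated `A`-closure `M_β` of `M`, defined by transfinite recursion. -/
noncomputable def AClosureIter (A : Type u) [TopologicalSpace A] (a : A) {X : Type u}
    [TopologicalSpace X] (M : Set X) (β : Ordinal.{u}) : Set X :=
  Ordinal.limitRecOn β M (fun _ ih => AClosureStep A a ih)
    (fun o _ ih => ⋃ (γ : Ordinal.{u}) (h : γ < o), ih γ h)

/-- The transfinite `A`-closure `M̃ = ⋃_{β ∈ On} M_β` of `M`. -/
noncomputable def ATilde (A : Type u) [TopologicalSpace A] (a : A) {X : Type u}
    [TopologicalSpace X] (M : Set X) : Set X :=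
  ⋃ β : Ordinal.{u}, AClosureIter A a M β

/-- The tightness of a space `A`: the least cardinal `κ` such that whenever `x ∈ closure C`
there is `D ⊆ C` with `#D ≤ κ` and `x ∈ closure D`. -/
noncomputable def tightness (A : Type u) [TopologicalSpace A] : Cardinal.{u} :=
  sInf {κ : Cardinal.{u} | ∀ (C : Set A) (x : A), x ∈ closure C →
    ∃ D : Set A, D ⊆ C ∧ Cardinal.mk D ≤ κ ∧ x ∈ closure D}

section Aux

variable {A : Type u} [tA : TopologicalSpace A] {a : A}

/-- Unfolding: iteration at 0. -/
lemma AClosureIter_zero {X : Type u} [TopologicalSpace X] (M : Set X) :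
    AClosureIter A a M 0 = M := by
  simp [AClosureIter]

/-- Unfolding: iteration at a successor. -/
lemma AClosureIter_succ {X : Type u} [TopologicalSpace X] (M : Set X) (β : Ordinal.{u}) :
    AClosureIter A a M (Order.succ β) = AClosureStep A a (AClosureIter A a M β) := by
  simp [AClosureIter]

/-- Unfolding: iteration at a limit. -/
lemma AClosureIter_limit {X : Type u} [TopologicalSpace X] (M : Set X) {o : Ordinal.{u}}
    (ho : Order.IsSuccLimit o) :
    AClosureIter A a M o = ⋃ (γ : Ordinal.{u}) (_ : γ < o), AClosureIter A a M γ := by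
  rw [AClosureIter, Ordinal.limitRecOn_limit _ _ _ _ ho]
  rfl

/-- The step operation is monotone. -/
lemma AClosureStep_mono {X : Type u} [TopologicalSpace X] {M N : Set X} (h : M ⊆ N) :
    AClosureStep A a M ⊆ AClosureStep A a N := by
  rintro x ⟨B, hB, f, hf, hfm, rfl⟩
  exact ⟨B, hB, f, hf, fun b hb => h (hfm b hb), rfl⟩

/-- Any set not containing the accumulation point of a filter space is open. -/
lemma isOpen_of_not_mem (hA : IsFilterSpace A a) {U : Set A} (h : a ∉ U) : IsOpen U := by
  have hU : U = ⋃ x ∈ U, {x} := by simp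
  rw [hU]
  exact isOpen_biUnion fun x hx => hA.2 x (by rintro rfl; exact h hx)

/-- The whole space is a filter subspace of itself. -/
lemma isFilterSubspace_univ (hA : IsFilterSpace A a) : IsFilterSubspace A a Set.univ := by
  refine ⟨Set.mem_univ a, ?_⟩
  rw [← Set.compl_eq_univ_diff, closure_compl]
  intro hmem
  have : IsOpen ({a} : Set A) := by
    have h1 : interior ({a} : Set A) = {a} :=
      le_antisymm interior_subset (Set.singleton_subset_iff.2 hmem)
    rw [← h1]; exact isOpen_interior
  exact hA.1 this

/-- `M ⊆ step M`. -/
lemma subset_AClosureStep (hA : IsFilterSpace A a) {X : Type u} [TopologicalSpace X]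
    (M : Set X) : M ⊆ AClosureStep A a M := by
  intro x hx
  exact ⟨Set.univ, isFilterSubspace_univ hA, fun _ => x, continuous_const,
    fun _ _ => hx, rfl⟩

/-- Monotonicity of the iterated closure in the ordinal. -/
lemma AClosureIter_mono (hA : IsFilterSpace A a) {X : Type u} [TopologicalSpace X]
    (M : Set X) : ∀ γ : Ordinal.{u}, ∀ β ≤ γ, AClosureIter A a M β ⊆ AClosureIter A a M γ := by
  intro γ
  induction γ using Ordinal.limitRecOn with
  | zero =>
    intro β hβ
    rw [nonpos_iff_eq_zero.mp hβ]
  | add_one γ ih =>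
    rw [Ordinal.add_one_eq_succ]
    intro β hβ
    rcases hβ.lt_or_eq with h | h
    · have h' : β ≤ γ := Order.lt_succ_iff.mp h
      refine (ih β h').trans ?_
      rw [AClosureIter_succ]
      exact subset_AClosureStep hA _
    · rw [h]
  | limit γ hγ ih =>
    intro β hβ
    rcases hβ.lt_or_eq with h | h
    · rw [AClosureIter_limit M hγ]
      exact le_of_eq rfl |>.trans (Set.subset_iUnion₂ (s := fun γ' _ => AClosureIter A a M γ') β h)
    · rw [h]

/-- The step of a set is contained in its closure. -/
lemma AClosureStep_subset_closure {X : Type u} [TopologicalSpace X] (S : Set X) :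
    AClosureStep A a S ⊆ closure S := by
  rintro x ⟨B, hB, f, hf, hfm, rfl⟩
  set t : Set B := {b : B | (b : A) ≠ a} with ht
  have himg : (Subtype.val '' t : Set A) = B \ {a} := by
    ext y
    simp only [Set.mem_image, Set.mem_diff, Set.mem_singleton_iff, ht, Set.mem_setOf_eq]
    constructor
    · rintro ⟨b, hb, rfl⟩; exact ⟨b.2, hb⟩
    · rintro ⟨hy, hne⟩; exact ⟨⟨y, hy⟩, hne, rfl⟩
  have hcl : (⟨a, hB.1⟩ : B) ∈ closure t := by
    rw [closure_subtype, himg]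
    exact hB.2
  have h1 : f ⟨a, hB.1⟩ ∈ closure (f '' t) :=
    (image_closure_subset_closure_image hf) (Set.mem_image_of_mem f hcl)
  refine closure_mono ?_ h1
  rintro y ⟨b, hb, rfl⟩
  exact hfm b hb

/-- Every iterate is contained in the closure. -/
lemma AClosureIter_subset_closure {X : Type u} [TopologicalSpace X] (M : Set X) :
    ∀ β : Ordinal.{u}, AClosureIter A a M β ⊆ closure M := by
  intro β
  induction β using Ordinal.limitRecOn with
  | zero => rw [AClosureIter_zero]; exact subset_closure
  | add_one β ih =>
    rw [Ordinal.add_one_eq_succ, AClosureIter_succ]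
    refine (AClosureStep_subset_closure _).trans ?_
    rw [← closure_closure (s := M)]
    exact closure_mono ih
  | limit β hβ ih =>
    rw [AClosureIter_limit M hβ]
    exact Set.iUnion₂_subset ih

/-- The tightness of a space is attained. -/
lemma tightness_spec (A : Type u) [TopologicalSpace A] :
    ∀ (C : Set A) (x : A), x ∈ closure C →
      ∃ D : Set A, D ⊆ C ∧ Cardinal.mk D ≤ tightness A ∧ x ∈ closure D := by
  have : tightness A ∈ {κ : Cardinal.{u} | ∀ (C : Set A) (x : A), x ∈ closure C →
      ∃ D : Set A, D ⊆ C ∧ Cardinal.mk D ≤ κ ∧ x ∈ closure D} :=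
    csInf_mem ⟨Cardinal.mk A, fun C x hx => ⟨C, subset_rfl, Cardinal.mk_set_le C, hx⟩⟩
  exact this

/-- A filter space with finite tightness is Alexandrov-discrete; hence a non-finitely-generated
filter space has infinite tightness. -/
lemma aleph0_le_tightness (hA : IsFilterSpace A a) (hfg : ¬ AlexandrovDiscrete A) :
    Cardinal.aleph0 ≤ tightness A := by
  by_contra hlt
  push_neg at hlt
  apply hfg
  constructor
  intro S hS
  by_cases ha : a ∈ ⋂₀ S
  · -- `a` is in the interior of the intersection
    have hint : a ∈ interior (⋂₀ S) := by
      by_contra hni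
      have hcl : a ∈ closure ((⋂₀ S)ᶜ) := by
        rw [closure_compl]; exact hni
      obtain ⟨D, hDsub, hDcard, hDcl⟩ := tightness_spec A _ a hcl
      have hDfin : D.Finite := Cardinal.lt_aleph0_iff_set_finite.mp (hDcard.trans_lt hlt)
      -- for each d ∈ D pick an open set in S missing d
      have hpick : ∀ d ∈ D, ∃ s ∈ S, d ∉ s := by
        intro d hd
        have := hDsub hd
        simpa [Set.mem_sInter] using this
      choose! s hsS hsd using hpick
      have hUopen : IsOpen (⋂ d ∈ D, s d) := hDfin.isOpen_biInter fun d hd => hS _ (hsS d hd)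
      have haU : a ∈ ⋂ d ∈ D, s d := by
        refine Set.mem_biInter fun d hd => ?_
        exact (Set.mem_sInter.mp ha) _ (hsS d hd)
      obtain ⟨y, hy1, hy2⟩ := mem_closure_iff.mp hDcl _ hUopen haU
      exact hsd y hy2 (Set.mem_iInter₂.mp hy1 y hy2)
    rw [isOpen_iff_mem_nhds]
    intro x hx
    by_cases hxa : x = a
    · subst hxa
      exact mem_interior_iff_mem_nhds.mp hint
    · exact mem_nhds_iff.mpr ⟨{x}, Set.singleton_subset_iff.mpr hx, hA.2 x hxa, rfl⟩
  · exact isOpen_of_not_mem hA ha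

/-- Members of `CH {A}` carry the final topology with respect to continuous maps from `A`:
every `A`-closed set is closed. -/
lemma CH_isClosed {X : Type u} [tX : TopologicalSpace X]
    (hX : CH (singleClass A tA) X tX) (S : Set X)
    (hS : ∀ f : A → X, Continuous f → IsClosed (f ⁻¹' S)) : IsClosed S := by
  classical
  let C : TopClass.{u} := fun Y tY =>
    ∀ S : Set Y, (∀ f : A → Y, @Continuous A Y tA tY f → @IsClosed A tA (f ⁻¹' S)) →
      @IsClosed Y tY S
  have hcor : IsCoreflective C := by
    constructor
    · intro ι Y t hY T hT
      rw [isClosed_sigma_iff]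
      intro i
      refine hY i _ ?_
      intro g hg
      have : Continuous (fun x => (⟨i, g x⟩ : (j : ι) × Y j)) := continuous_sigmaMk.comp hg
      exact hT _ this
    · intro Y Z tY tZ q hq hY T hT
      rw [← hq.isClosed_preimage]
      refine hY _ ?_
      intro g hg
      exact hT (q ∘ g) (hq.continuous.comp hg)
  have hsingle : ∀ Y tY, singleClass A tA Y tY → C Y tY := by
    intro Y tY hY T hT
    obtain ⟨h⟩ := hY
    have h1 : @IsClosed A tA (h.symm ⁻¹' T) := hT _ h.symm.continuous
    have h2 : T = ⇑h ⁻¹' (⇑h.symm ⁻¹' T) := by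
      ext y; simp
    rw [h2]
    exact h1.preimage h.continuous
  exact hX C hcor hsingle S hS

/-- The transfinite `A`-closure of any set is closed in members of `CH {A}`. -/
lemma ATilde_isClosed (hA : IsFilterSpace A a) {X : Type u} [tX : TopologicalSpace X]
    (hX : CH (singleClass A tA) X tX) (M : Set X) : IsClosed (ATilde A a M) := by
  classical
  refine CH_isClosed hX _ ?_
  intro f hf
  apply isClosed_of_closure_subset
  intro x hx
  by_cases hxa : x = a
  · rw [hxa] at hx ⊢
    by_cases hmem : a ∈ f ⁻¹' ATilde A a M
    · exact hmem
    · -- build a filter subspace from the preimage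
      set P : Set A := f ⁻¹' ATilde A a M with hP
      have hchoice : ∀ b : P, ∃ β : Ordinal.{u}, f (b : A) ∈ AClosureIter A a M β := by
        intro b
        exact Set.mem_iUnion.mp b.2
      choose g hg using hchoice
      set β' : Ordinal.{u} := ⨆ b : P, g b with hβ'
      have hgle : ∀ b : P, g b ≤ β' := fun b => le_ciSup (Ordinal.bddAbove_range g) b
      have hfb : ∀ b : P, f (b : A) ∈ AClosureIter A a M β' :=
        fun b => AClosureIter_mono hA M β' (g b) (hgle b) (hg b)
      set B : Set A := insert a P with hB
      have hBfs : IsFilterSubspace A a B := by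
        refine ⟨Set.mem_insert a P, ?_⟩
        rw [hB, Set.insert_diff_self_of_notMem hmem]
        exact hx
      refine Set.mem_iUnion.mpr ⟨Order.succ β', ?_⟩
      rw [AClosureIter_succ]
      refine ⟨B, hBfs, fun b => f (b : A), hf.comp continuous_subtype_val, ?_, rfl⟩
      intro b hb
      have hbP : (b : A) ∈ P := by
        rcases b.2 with h | h
        · exact absurd h hb
        · exact h
      exact hfb ⟨(b : A), hbP⟩
  · -- x is isolated
    obtain ⟨y, hy1, hy2⟩ := mem_closure_iff.mp hx {x} (hA.2 x hxa) rfl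
    rwa [← Set.mem_singleton_iff.mp hy1]

/-- The iteration stabilizes at the initial ordinal of the successor of the tightness. -/
lemma AClosureStep_fixed (hA : IsFilterSpace A a) (ht : Cardinal.aleph0 ≤ tightness A)
    {X : Type u} [tX : TopologicalSpace X] (M : Set X) :
    AClosureStep A a (AClosureIter A a M (Order.succ (tightness A)).ord) ⊆
      AClosureIter A a M (Order.succ (tightness A)).ord := by
  classical
  set t := tightness A with htdef
  set o : Ordinal.{u} := (Order.succ t).ord with ho
  have hreg : (Order.succ t).IsRegular := Cardinal.isRegular_succ ht
  have hlim : Order.IsSuccLimit o := Cardinal.isSuccLimit_ord (ht.trans (Order.le_succ t))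
  rintro x ⟨B, hB, f, hf, hfm, rfl⟩
  obtain ⟨D, hDsub, hDcard, hDcl⟩ := tightness_spec A (B \ {a}) a hB.2
  have hDB : D ⊆ B := hDsub.trans Set.diff_subset
  have haD : a ∉ D := fun h => (hDsub h).2 rfl
  have hchoice : ∀ d : D, ∃ γ : Ordinal.{u}, γ < o ∧
      f ⟨(d : A), hDB d.2⟩ ∈ AClosureIter A a M γ := by
    intro d
    have hne : ((d : A) : A) ≠ a := (hDsub d.2).2
    have hmem : f ⟨(d : A), hDB d.2⟩ ∈ AClosureIter A a M o := hfm _ hne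
    rw [AClosureIter_limit M hlim] at hmem
    obtain ⟨γ, hγ, hmem⟩ := Set.mem_iUnion₂.mp hmem
    exact ⟨γ, hγ, hmem⟩
  choose g hg1 hg2 using hchoice
  set γ' : Ordinal.{u} := ⨆ d : D, Order.succ (g d) with hγ'
  have hγ'lt : γ' < o := by
    refine Ordinal.iSup_lt_ord ?_ ?_
    · rw [hreg.cof_eq]
      exact hDcard.trans_lt (Order.lt_succ t)
    · intro d
      exact hlim.succ_lt (hg1 d)
  have hfd : ∀ d : D, f ⟨(d : A), hDB d.2⟩ ∈ AClosureIter A a M γ' := by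
    intro d
    refine AClosureIter_mono hA M γ' (g d) ?_ (hg2 d)
    exact (Order.le_succ _).trans (le_ciSup (Ordinal.bddAbove_range _) d)
  -- the restricted filter subspace
  set B' : Set A := insert a D with hB'def
  have hB'fs : IsFilterSubspace A a B' := by
    refine ⟨Set.mem_insert a D, ?_⟩
    rw [hB'def, Set.insert_diff_self_of_notMem haD]
    exact hDcl
  have hB'B : B' ⊆ B := Set.insert_subset hB.1 hDB
  have hstep : f ⟨a, hB.1⟩ ∈ AClosureIter A a M (Order.succ γ') := by
    rw [AClosureIter_succ]
    refine ⟨B', hB'fs, fun b => f (Set.inclusion hB'B b), hf.comp (continuous_inclusion hB'B),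
      ?_, rfl⟩
    intro b hb
    have hbD : (b : A) ∈ D := by
      rcases b.2 with h | h
      · exact absurd h hb
      · exact h
    exact hfd ⟨(b : A), hbD⟩
  exact AClosureIter_mono hA M o (Order.succ γ') (hlim.succ_lt hγ'lt).le hstep

end Aux

/-- Let `A` be a filter space with accumulation point `a` which is not finitely
generated and let `α` be the tightness of `A`.  If `X ∈ CH {A}`, then for every `M ⊆ X` the
iterated `A`-closure `M_{α⁺}` (at the initial ordinal of the successor cardinal `α⁺`) equals
the closure of `M` in `X`. -/
theorem stmt4 (A : Type u) [tA : TopologicalSpace A] (a : A) (hA : IsFilterSpace A a)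
    (hfg : ¬ AlexandrovDiscrete A)
    (X : Type u) [tX : TopologicalSpace X] (hX : CH (singleClass A tA) X tX) :
    ∀ M : Set X, AClosureIter A a M (Order.succ (tightness A)).ord = closure M := by
  intro M
  have ht : Cardinal.aleph0 ≤ tightness A := aleph0_le_tightness hA hfg
  set o : Ordinal.{u} := (Order.succ (tightness A)).ord with ho
  have hfix := AClosureStep_fixed hA ht (X := X) M
  -- every iterate is contained in the iterate at `o`
  have hall : ∀ β : Ordinal.{u}, AClosureIter A a M β ⊆ AClosureIter A a M o := by
    intro β
    induction β using Ordinal.limitRecOn with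
    | zero => exact AClosureIter_mono hA M o 0 (zero_le (a := o))
    | add_one β ih =>
      rw [Ordinal.add_one_eq_succ, AClosureIter_succ]
      exact (AClosureStep_mono ih).trans hfix
    | limit β hβ ih =>
      rw [AClosureIter_limit M hβ]
      exact Set.iUnion₂_subset ih
  apply subset_antisymm
  · exact AClosureIter_subset_closure M o
  · have hTc : IsClosed (ATilde A a M) := ATilde_isClosed hA hX M
    have hMT : M ⊆ ATilde A a M := fun x hx =>
      Set.mem_iUnion.mpr ⟨0, by rwa [AClosureIter_zero]⟩
    refine (closure_minimal hMT hTc).trans ?_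
    exact Set.iUnion_subset hall
end

section
/- Let α ≥ ω₁ be a regular cardinal. Then SCH({C(α)}) = CH({C⁻(α,n) : 0 < n < ω}), i.e., the class of all subspaces of spaces in the coreflective hull of C(α) equals the coreflective hull of the family of spaces C⁻(α,n) for natural numbers n ≥ 1. -/
universe u v

/-- `CIdx K m` represents the set `αⁿ` for `n = m+1`, where `K` plays the role of `α`. -/
def CIdx (K : Type u) : ℕ → Type u
  | 0 => K
  | m + 1 => K × CIdx K m

/-- Given a subset `U` of `(α × αⁿ) ∪ {∞}` and `ξ`, the set `{x ∈ αⁿ : (ξ,x) ∈ U} ∪ {∞}`. -/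
def cslice {K J : Type u} (U : Set (Option (K × J))) (ξ : K) : Set (Option J) :=
  insert none (Option.some '' {x : J | Option.some (ξ, x) ∈ U})

/-- The openness predicate of the space `C⁻(α, m+1)`. -/
def CIsOpen (K : Type u) : (m : ℕ) → Set (Option (CIdx K m)) → Prop
  | 0, U => none ∈ U → Cardinal.mk ((Option.some ⁻¹' U)ᶜ : Set K) < Cardinal.mk K
  | m + 1, U => none ∈ U →
      Cardinal.mk (({ξ : K | CIsOpen K m (cslice U ξ)}ᶜ : Set K)) < Cardinal.mk K

theorem cslice_mono {K J : Type u} {U V : Set (Option (K × J))} (h : U ⊆ V) (ξ : K) :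
    cslice U ξ ⊆ cslice V ξ := by
  intro z hz
  rcases hz with hz | hz
  · exact Or.inl hz
  · rcases hz with ⟨x, hx, rfl⟩
    exact Or.inr ⟨x, h hx, rfl⟩

theorem none_mem_cslice {K J : Type u} (U : Set (Option (K × J))) (ξ : K) :
    none ∈ cslice U ξ := Set.mem_insert _ _

theorem cisOpen_of_none_not_mem (K : Type u) (m : ℕ) (U : Set (Option (CIdx K m)))
    (h : none ∉ U) : CIsOpen K m U := by
  cases m with
  | zero => exact fun hU => absurd hU h
  | succ m => exact fun hU => absurd hU h

theorem cisOpen_mono (K : Type u) (m : ℕ) :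
    ∀ U V : Set (Option (CIdx K m)), CIsOpen K m U → U ⊆ V → (none ∈ V → none ∈ U) →
      CIsOpen K m V := by
  induction m with
  | zero =>
    intro U V hU hUV hnone hV
    refine lt_of_le_of_lt (Cardinal.mk_le_mk_of_subset ?_) (hU (hnone hV))
    intro k hk hU'
    exact hk (hUV hU')
  | succ m ih =>
    intro U V hU hUV hnone hV
    refine lt_of_le_of_lt (Cardinal.mk_le_mk_of_subset ?_) (hU (hnone hV))
    intro ξ hξ hopen
    exact hξ (ih _ _ hopen (cslice_mono hUV ξ) (fun _ => none_mem_cslice U ξ))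

theorem cslice_univ {K J : Type u} (ξ : K) :
    cslice (Set.univ : Set (Option (K × J))) ξ = Set.univ := by
  ext z
  cases z with
  | none => simp [cslice]
  | some j => simp [cslice]

theorem cisOpen_univ (K : Type u) [Nonempty K] (m : ℕ) : CIsOpen K m Set.univ := by
  cases m with
  | zero =>
    intro _
    show Cardinal.mk ((Option.some ⁻¹' (Set.univ : Set (Option K)))ᶜ : Set K) < Cardinal.mk K
    simp only [Set.preimage_univ, Set.compl_univ, Cardinal.mk_emptyCollection]
    exact Cardinal.mk_ne_zero K |>.bot_lt
  | succ m =>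
    intro _
    have h : ({ξ : K | CIsOpen K m (cslice (Set.univ : Set (Option (CIdx K (m+1)))) ξ)}ᶜ : Set K)
        = ∅ := by
      ext ξ
      simp only [Set.mem_compl_iff, Set.mem_setOf_eq, Set.mem_empty_iff_false, iff_false, not_not]
      show CIsOpen K m (cslice (Set.univ : Set (Option (K × CIdx K m))) ξ)
      rw [cslice_univ]
      exact cisOpen_univ K m
    rw [h, Cardinal.mk_emptyCollection]
    exact Cardinal.mk_ne_zero K |>.bot_lt

theorem some_mem_cslice_iff {K J : Type u} (U : Set (Option (K × J))) (ξ : K) (x : J) :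
    some x ∈ cslice U ξ ↔ some (ξ, x) ∈ U := by
  simp [cslice]

theorem cslice_inter {K J : Type u} (U V : Set (Option (K × J))) (ξ : K) :
    cslice (U ∩ V) ξ = cslice U ξ ∩ cslice V ξ := by
  ext z
  cases z with
  | none => simp [none_mem_cslice]
  | some x => simp [some_mem_cslice_iff]

theorem cisOpen_inter (K : Type u) [Infinite K] (m : ℕ) :
    ∀ U V : Set (Option (CIdx K m)), CIsOpen K m U → CIsOpen K m V →
      CIsOpen K m (U ∩ V) := by
  induction m with
  | zero =>
    intro U V hU hV h
    have hsub : ((Option.some ⁻¹' (U ∩ V))ᶜ : Set K) ⊆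
        (Option.some ⁻¹' U)ᶜ ∪ (Option.some ⁻¹' V)ᶜ := by
      exact fun x hx => Classical.byContradiction fun hc =>
        hx ⟨Classical.byContradiction fun h1 => hc (Or.inl h1),
          Classical.byContradiction fun h2 => hc (Or.inr h2)⟩
    refine lt_of_le_of_lt (Cardinal.mk_le_mk_of_subset hsub) ?_
    refine lt_of_le_of_lt (Cardinal.mk_union_le _ _) ?_
    exact Cardinal.add_lt_of_lt (Cardinal.aleph0_le_mk K) (hU h.1) (hV h.2)
  | succ m ih =>
    intro U V hU hV h
    have hsub : ({ξ : K | CIsOpen K m (cslice (U ∩ V) ξ)}ᶜ : Set K) ⊆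
        {ξ : K | CIsOpen K m (cslice U ξ)}ᶜ ∪ {ξ : K | CIsOpen K m (cslice V ξ)}ᶜ := by
      intro ξ hξ
      by_contra hc
      simp only [Set.mem_union, Set.mem_compl_iff, Set.mem_setOf_eq, not_not] at hc hξ
      push_neg at hc
      exact hξ (by rw [show cslice (U ∩ V) ξ = _ from cslice_inter (K := K) (J := CIdx K m) U V ξ]; exact ih _ _ hc.1 hc.2)
    refine lt_of_le_of_lt (Cardinal.mk_le_mk_of_subset hsub) ?_
    refine lt_of_le_of_lt (Cardinal.mk_union_le _ _) ?_
    exact Cardinal.add_lt_of_lt (Cardinal.aleph0_le_mk K) (hU h.1) (hV h.2)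

theorem cisOpen_sUnion (K : Type u) (m : ℕ) (S : Set (Set (Option (CIdx K m))))
    (hS : ∀ U ∈ S, CIsOpen K m U) : CIsOpen K m (⋃₀ S) := by
  by_cases h : none ∈ ⋃₀ S
  · obtain ⟨U, hUS, hU⟩ := h
    exact cisOpen_mono K m U _ (hS U hUS) (Set.subset_sUnion_of_mem hUS) (fun _ => hU)
  · exact cisOpen_of_none_not_mem _ _ _ h

/-- The space `C⁻(α, m+1)` from the paper (so `m = 0` gives `C(α)` itself);
`K` plays the role of the set of ordinals `< α` and `none` plays the role of `∞`. -/
def CTop (K : Type u) [Infinite K] (m : ℕ) : TopologicalSpace (Option (CIdx K m)) where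
  IsOpen := CIsOpen K m
  isOpen_univ := cisOpen_univ K m
  isOpen_inter := cisOpen_inter K m
  isOpen_sUnion := cisOpen_sUnion K m

instance instCTop (K : Type u) [Infinite K] (m : ℕ) : TopologicalSpace (Option (CIdx K m)) :=
  CTop K m
open Topology Cardinal

/-! ### Generic facts about coreflective hulls -/

theorem ch_mem {A : TopClass.{u}} {Y : Type u} {tY : TopologicalSpace Y} (h : A Y tY) :
    CH A Y tY := fun _C _hC hA => hA Y tY h

theorem ch_coreflective (A : TopClass.{u}) : IsCoreflective (CH A) :=
  ⟨fun ι X t h C hC hA => hC.1 ι X t (fun i => h i C hC hA),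
   fun X Y tX tY f hf h C hC hA => hC.2 X Y tX tY f hf (h C hC hA)⟩

/-! ### Cardinal facts -/

theorem aleph0_lt_mk {K : Type u} [Infinite K] (hω1 : Cardinal.aleph 1 ≤ Cardinal.mk K) :
    ℵ₀ < Cardinal.mk K := by
  refine lt_of_lt_of_le ?_ hω1
  rw [← Cardinal.aleph_zero]
  exact Cardinal.aleph_lt_aleph.mpr zero_lt_one

theorem exists_large_fiber {K : Type u} [Infinite K] (hreg : (Cardinal.mk K).IsRegular)
    (hω1 : Cardinal.aleph 1 ≤ Cardinal.mk K) (n : K → ℕ) :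
    ∃ m : ℕ, Cardinal.mk {ξ : K | n ξ = m} = Cardinal.mk K := by
  by_contra h
  push_neg at h
  have hlt : ∀ m : ℕ, Cardinal.mk {ξ : K | n ξ = m} < Cardinal.mk K := by
    intro m
    exact lt_of_le_of_ne (Cardinal.mk_set_le _) (h m)
  have hcover : (⋃ m : ULift.{u} ℕ, {ξ : K | n ξ = m.down}) = Set.univ := by
    ext ξ; simp only [Set.mem_iUnion, Set.mem_setOf_eq, Set.mem_univ, iff_true]
    exact ⟨⟨n ξ⟩, rfl⟩
  have hle : Cardinal.mk K ≤ Cardinal.mk (⋃ m : ULift.{u} ℕ, {ξ : K | n ξ = m.down}) := by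
    rw [hcover, Cardinal.mk_univ]
  have hlt2 : Cardinal.mk (⋃ m : ULift.{u} ℕ, {ξ : K | n ξ = m.down}) < Cardinal.mk K := by
    refine lt_of_le_of_lt (Cardinal.mk_iUnion_le _) ?_
    refine Cardinal.mul_lt_of_lt hreg.1 ?_ ?_
    · rw [Cardinal.mk_uLift, Cardinal.mk_nat, Cardinal.lift_aleph0]
      exact aleph0_lt_mk hω1
    · refine Cardinal.iSup_lt_of_isRegular hreg ?_ (fun m => hlt m.down)
      rw [Cardinal.mk_uLift, Cardinal.mk_nat, Cardinal.lift_aleph0]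
      exact aleph0_lt_mk hω1
  exact absurd (hle.trans_lt hlt2) (lt_irrefl _)

/-! ### Convergence of `K`-indexed sequences -/

/-- `f : K → Y` converges to `y`: outside every open neighbourhood of `y` there are
fewer than `#K` indices. -/
def Conv (K : Type u) {Y : Type u} (tY : TopologicalSpace Y) (f : K → Y) (y : Y) : Prop :=
  ∀ W : Set Y, @IsOpen Y tY W → y ∈ W → Cardinal.mk {ξ : K | f ξ ∉ W} < Cardinal.mk K

/-- The `α`-closure: all limits of `K`-indexed sequences from `S`. -/
def acl (K : Type u) {Y : Type u} (tY : TopologicalSpace Y) (S : Set Y) : Set Y :=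
  {y | ∃ f : K → Y, (∀ ξ, f ξ ∈ S) ∧ Conv K tY f y}

theorem conv_const {K : Type u} [Infinite K] {Y : Type u} (tY : TopologicalSpace Y) (y : Y) :
    Conv K tY (fun _ => y) y := by
  intro W _ hyW
  have : {ξ : K | (fun _ => y) ξ ∉ W} = ∅ := by
    ext ξ; simp [hyW]
  rw [this, Cardinal.mk_emptyCollection]
  exact Cardinal.mk_ne_zero K |>.bot_lt

theorem self_subset_acl {K : Type u} [Infinite K] {Y : Type u} (tY : TopologicalSpace Y)
    (S : Set Y) : S ⊆ acl K tY S :=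
  fun y hy => ⟨fun _ => y, fun _ => hy, conv_const tY y⟩

theorem conv_comp {K : Type u} {Y : Type u} (tY : TopologicalSpace Y) {s : Set K}
    (e : K ≃ s) {f : K → Y} {y : Y} (hf : Conv K tY f y) :
    Conv K tY (fun ζ => f (e ζ : K)) y := by
  intro W hW hyW
  refine lt_of_le_of_lt (Cardinal.mk_le_of_injective
    (f := fun ζ : {ζ : K | f (e ζ : K) ∉ W} => (⟨(e ζ.1 : K), ζ.2⟩ : {ξ : K | f ξ ∉ W})) ?_)
    (hf W hW hyW)
  intro a b hab
  simp only [Subtype.mk.injEq] at hab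
  exact Subtype.ext (e.injective (Subtype.ext hab))

/-! ### `α`-generated spaces -/

/-- A space is `α`-generated if its topology is final with respect to all continuous maps
from `C(α)`. -/
def AGen (K : Type u) [Infinite K] : TopClass.{u} := fun Z tZ =>
  ∀ U : Set Z, (∀ f : Option (CIdx K 0) → Z,
      @Continuous _ _ (CTop K 0) tZ f → @IsOpen _ (CTop K 0) (f ⁻¹' U)) → @IsOpen Z tZ U

theorem agen_coreflective (K : Type u) [Infinite K] : IsCoreflective (AGen K) := by
  constructor
  · intro ι X t h U hU
    letI := t
    rw [isOpen_sigma_iff]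
    intro i
    refine h i _ (fun f hf => ?_)
    have := hU (fun z => ⟨i, f z⟩) (continuous_sigmaMk.comp hf)
    exact this
  · intro X Y tX tY f hf h U hU
    letI := tX; letI := tY
    rw [hf.eq_coinduced, isOpen_coinduced]
    refine h _ (fun g hg => ?_)
    exact hU (f ∘ g) (hf.continuous.comp hg)

theorem agen_single (K : Type u) [Infinite K] :
    ∀ Y tY, singleClass (Option (CIdx K 0)) (CTop K 0) Y tY → AGen K Y tY := by
  rintro Y tY ⟨φ⟩ U hU
  letI := tY
  have h2 := hU φ.symm φ.symm.continuous
  have h3 : U = φ ⁻¹' (φ.symm ⁻¹' U) := by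
    ext y; simp
  rw [h3]
  exact φ.continuous.isOpen_preimage _ h2

theorem isOpen_compl_of_acl {K : Type u} [Infinite K] {Y : Type u} {tY : TopologicalSpace Y}
    (hA : AGen K Y tY) {S : Set Y} (hS : acl K tY S ⊆ S) : @IsOpen Y tY Sᶜ := by
  refine hA Sᶜ (fun f hf => ?_)
  by_cases h0 : f none ∈ S
  · exact cisOpen_of_none_not_mem K 0 _ (fun hc => hc h0)
  · show CIsOpen K 0 _
    intro _
    by_contra hbig
    push_neg at hbig
    have hBle : Cardinal.mk ((Option.some ⁻¹' (f ⁻¹' Sᶜ))ᶜ : Set K) ≤ Cardinal.mk K :=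
      Cardinal.mk_set_le _
    have hBeq : Cardinal.mk K = Cardinal.mk ((Option.some ⁻¹' (f ⁻¹' Sᶜ))ᶜ : Set K) :=
      le_antisymm hbig hBle
    obtain ⟨e⟩ := Cardinal.eq.mp hBeq
    have hmem : ∀ ζ : K, f (some (e ζ : K)) ∈ S := by
      intro ζ
      have := (e ζ).2
      simp only [Set.mem_compl_iff, Set.mem_preimage] at this
      exact Classical.byContradiction fun hc => this hc
    have hconv : Conv K tY (fun ζ => f (some (e ζ : K))) (f none) := by
      intro W hW hyW
      have hopen := hf.isOpen_preimage W hW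
      have hfw : CIsOpen K 0 (f ⁻¹' W) := hopen
      have hsmall := hfw (by exact hyW)
      refine lt_of_le_of_lt (Cardinal.mk_le_of_injective
        (f := fun ζ : {ζ : K | f (some ((e ζ : K))) ∉ W} =>
          (⟨(e ζ.1 : K), fun hc => ζ.2 hc⟩ : ((Option.some ⁻¹' (f ⁻¹' W))ᶜ : Set K))) ?_) hsmall
      intro a b hab
      simp only [Subtype.mk.injEq] at hab
      exact Subtype.ext (e.injective (Subtype.ext hab))
    exact h0 (hS ⟨_, hmem, hconv⟩)

/-! ### The iterated `α`-closures -/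

def SSeq (K : Type u) {Y : Type u} (tY : TopologicalSpace Y) (S0 : Set Y) : ℕ → Set Y
  | 0 => S0
  | n + 1 => acl K tY (SSeq K tY S0 n)

theorem acl_iUnion_sseq {K : Type u} [Infinite K] {Y : Type u} {tY : TopologicalSpace Y}
    (hreg : (Cardinal.mk K).IsRegular) (hω1 : Cardinal.aleph 1 ≤ Cardinal.mk K) (S0 : Set Y) :
    acl K tY (⋃ n : ℕ, SSeq K tY S0 n) ⊆ ⋃ n : ℕ, SSeq K tY S0 n := by
  rintro y ⟨f, hfS, hconv⟩
  have hch : ∀ ξ : K, ∃ m : ℕ, f ξ ∈ SSeq K tY S0 m := fun ξ => Set.mem_iUnion.mp (hfS ξ)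
  choose nn hnn using hch
  obtain ⟨m, hm⟩ := exists_large_fiber hreg hω1 nn
  obtain ⟨e⟩ := Cardinal.eq.mp hm.symm
  refine Set.mem_iUnion.mpr ⟨m + 1, ⟨fun ζ => f (e ζ : K), fun ζ => ?_, conv_comp tY e hconv⟩⟩
  have h2 := (e ζ).2
  simp only [Set.mem_setOf_eq] at h2
  have h3 := hnn ((e ζ : K))
  have h4 : SSeq K tY S0 (nn (e ζ : K)) = SSeq K tY S0 m := congrArg _ h2
  exact Set.mem_of_mem_of_subset h3 h4.subset

/-! ### Trees of converging sequences give continuous maps from `C⁻(α,n)` -/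

theorem tree_exists (K : Type u) [Infinite K] {Y : Type u} (tY : TopologicalSpace Y)
    (A : Set Y) : ∀ (n : ℕ) (y : Y), y ∈ SSeq K tY A (n + 1) →
    ∃ g : Option (CIdx K n) → Y, g none = y ∧ (∀ x, g (some x) ∈ A) ∧
      ∀ V : Set Y, @IsOpen Y tY V → CIsOpen K n (g ⁻¹' V) := by
  intro n
  induction n with
  | zero =>
    rintro y ⟨f, hf, hconv⟩
    simp only [SSeq] at hf
    refine ⟨fun z => Option.casesOn z y f, rfl, fun x => hf x, fun V hV => ?_⟩
    intro h0
    have heq : ((Option.some ⁻¹' ((fun z => Option.casesOn z y f) ⁻¹' V))ᶜ : Set K)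
        = {ξ : K | f ξ ∉ V} := by
      ext ξ; simp
    exact lt_of_le_of_lt (Cardinal.mk_le_mk_of_subset heq.subset) (hconv V hV h0)
  | succ n ih =>
    rintro y ⟨f, hf, hconv⟩
    choose g hg1 hg2 hg3 using fun ξ => ih (f ξ) (hf ξ)
    refine ⟨fun z => Option.casesOn z y (fun p => g p.1 (some p.2)), rfl,
      fun x => hg2 _ _, fun V hV => ?_⟩
    intro h0
    have hsub : ({ξ : K | CIsOpen K n
        (cslice ((fun z => Option.casesOn z y (fun p : K × CIdx K n => g p.1 (some p.2)))
          ⁻¹' V) ξ)}ᶜ : Set K) ⊆ {ξ : K | f ξ ∉ V} := by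
      intro ξ hξ
      simp only [Set.mem_compl_iff, Set.mem_setOf_eq] at hξ ⊢
      intro hfV
      apply hξ
      have hceq : cslice ((fun z => Option.casesOn z y
          (fun p : K × CIdx K n => g p.1 (some p.2))) ⁻¹' V) ξ = g ξ ⁻¹' V := by
        ext z
        cases z with
        | none =>
          simp only [cslice, Set.mem_insert_iff, Set.mem_preimage]
          rw [hg1]
          simp [hfV]
        | some x =>
          rw [some_mem_cslice_iff]
          simp
      rw [hceq]
      exact hg3 ξ V hV
    exact lt_of_le_of_lt (Cardinal.mk_le_mk_of_subset hsub) (hconv V hV h0)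

theorem not_cisOpen_singleton_none (K : Type u) [Infinite K] :
    ∀ n : ℕ, ¬ CIsOpen K n {none} := by
  intro n
  induction n with
  | zero =>
    intro h
    have h2 := h rfl
    have heq : ((Option.some ⁻¹' ({none} : Set (Option (CIdx K 0))))ᶜ : Set K) = Set.univ := by
      ext ξ; simp
      exact fun h => Option.some_ne_none _ (Set.mem_singleton_iff.mp (Set.mem_preimage.mp h))
    rw [heq, Cardinal.mk_univ] at h2
    exact absurd h2 (lt_irrefl _)
  | succ n ih =>
    intro h
    have h2 := h rfl
    have heq : ({ξ : K | CIsOpen K n (cslice ({none} : Set (Option (CIdx K (n+1)))) ξ)}ᶜ : Set K)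
        = Set.univ := by
      ext ξ
      simp only [Set.mem_compl_iff, Set.mem_setOf_eq, Set.mem_univ, iff_true]
      intro hc
      apply ih
      have : cslice ({none} : Set (Option (CIdx K (n+1)))) ξ = {none} := by
        ext z
        cases z with
        | none => exact iff_of_true (none_mem_cslice (K := K) (J := CIdx K n) _ ξ) rfl
        | some x => exact (some_mem_cslice_iff (K := K) (J := CIdx K n) _ ξ x).trans ⟨fun h => (Option.some_ne_none _ (Set.mem_singleton_iff.mp h)).elim, fun h => (Option.some_ne_none _ (Set.mem_singleton_iff.mp h)).elim⟩
      rwa [this] at hc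
    rw [heq, Cardinal.mk_univ] at h2
    exact absurd h2 (lt_irrefl _)

/-! ### The key lemma: subspaces of `α`-generated spaces are generated by the `C⁻(α,n)` -/

theorem key_nonopen {K : Type u} [Infinite K] (hreg : (Cardinal.mk K).IsRegular)
    (hω1 : Cardinal.aleph 1 ≤ Cardinal.mk K) {X Y : Type u} {tX : TopologicalSpace X}
    {tY : TopologicalSpace Y} {e : X → Y} (he : @Topology.IsEmbedding X Y tX tY e)
    (hY : AGen K Y tY) (U : Set X) (hU : ¬ @IsOpen X tX U) :
    ∃ (m : ℕ) (f : Option (CIdx K m) → X),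
      @Continuous _ _ (CTop K m) tX f ∧ ¬ CIsOpen K m (f ⁻¹' U) := by
  letI := tX; letI := tY
  classical
  set A : Set Y := e '' Uᶜ with hA
  set Sω : Set Y := ⋃ n : ℕ, SSeq K tY A n with hSω
  have hclosed : IsOpen Sωᶜ :=
    isOpen_compl_of_acl hY (acl_iUnion_sseq hreg hω1 A)
  have hex : ∃ x ∈ U, e x ∈ Sω := by
    by_contra hc
    push_neg at hc
    have hUeq : U = e ⁻¹' Sωᶜ := by
      ext x
      constructor
      · intro hx
        exact hc x hx
      · intro hx
        by_contra hxU
        refine absurd (Set.mem_iUnion.mpr ⟨0, ?_⟩ : e x ∈ Sω) hx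
        show e x ∈ SSeq K tY A 0
        exact ⟨x, hxU, rfl⟩
    exact hU (hUeq ▸ he.continuous.isOpen_preimage _ hclosed)
  obtain ⟨x, hxU, hxS⟩ := hex
  obtain ⟨n, hn⟩ := Set.mem_iUnion.mp hxS
  cases n with
  | zero =>
    obtain ⟨x', hx', hex'⟩ := hn
    exact absurd (he.injective hex' ▸ hx') (fun h => h hxU)
  | succ n =>
    obtain ⟨g, hg1, hg2, hg3⟩ := tree_exists K tY A n (e x) hn
    choose t ht1 ht2 using fun w : CIdx K n => (hg2 w : g (some w) ∈ e '' Uᶜ)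
    set h : Option (CIdx K n) → X := fun z => Option.casesOn z x t with hh
    have hcomp : ∀ z, e (h z) = g z := by
      intro z
      cases z with
      | none => exact hg1.symm
      | some w => exact ht2 w
    refine ⟨n, h, ?_, ?_⟩
    · rw [continuous_def]
      intro V hV
      obtain ⟨V', hV', rfl⟩ := he.toIsInducing.isOpen_iff.mp hV
      have heq : h ⁻¹' (e ⁻¹' V') = g ⁻¹' V' := by
        ext z
        simp only [Set.mem_preimage, hcomp z]
      show CIsOpen K n _
      rw [heq]
      exact hg3 V' hV'
    · have heq : h ⁻¹' U = {none} := by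
        ext z
        cases z with
        | none => simpa using hxU
        | some w =>
          simp only [Set.mem_preimage, Set.mem_singleton_iff]
          have := ht1 w
          simp only [Set.mem_compl_iff] at this
          simpa using this
      rw [heq]
      exact not_cisOpen_singleton_none K n

/-! ### Forward direction: `SCH {C(α)} ⊆ CH {C⁻(α,n)}` -/

theorem forward_dir {K : Type u} [Infinite K] (hreg : (Cardinal.mk K).IsRegular)
    (hω1 : Cardinal.aleph 1 ≤ Cardinal.mk K) {X : Type u} {tX : TopologicalSpace X}
    (hX : SCH (singleClass (Option (CIdx K 0)) (CTop K 0)) X tX) :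
    CH (fun Y tY => ∃ m : ℕ, Nonempty (@Homeomorph Y (Option (CIdx K m)) tY (CTop K m)))
      X tX := by
  obtain ⟨Y, tY, e, hYCH, he⟩ := hX
  have hY : AGen K Y tY := hYCH (AGen K) (agen_coreflective K) (agen_single K)
  intro C hC hCfam
  classical
  letI := tX
  -- index type: all continuous maps from the spaces `C⁻(α,m+1)` into `X`
  let ι : Type u := (p : ULift.{u} ℕ) ×
    {f : Option (CIdx K p.down) → X // @Continuous _ _ (CTop K p.down) tX f}
  let Z : ι → Type u := fun i => Option (CIdx K i.1.down)
  let tZ : (i : ι) → TopologicalSpace (Z i) := fun i => CTop K i.1.down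
  have hZC : ∀ i, C (Z i) (tZ i) :=
    fun i => hCfam _ _ ⟨i.1.down, ⟨Homeomorph.refl _⟩⟩
  have hsum := hC.1 ι Z tZ hZC
  let q : ((i : ι) × Z i) → X := fun p => p.1.2.1 p.2
  have hq : @Topology.IsQuotientMap _ _ (@instTopologicalSpaceSigma ι Z tZ) tX q := by
    refine ⟨⟨?_⟩, ?_⟩
    swap
    · intro x
      exact ⟨⟨⟨⟨0⟩, ⟨fun _ => x, @continuous_const _ _ (CTop K 0) tX x⟩⟩, none⟩, rfl⟩
    · letI := tZ
      refine TopologicalSpace.ext_iff.mpr (fun U => ?_)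
      show IsOpen U ↔ IsOpen (q ⁻¹' U)
      rw [isOpen_sigma_iff]
      constructor
      · intro hUopen i
        have : (Sigma.mk i ⁻¹' (q ⁻¹' U)) = i.2.1 ⁻¹' U := rfl
        rw [this]
        exact i.2.2.isOpen_preimage U hUopen
      · intro hall
        by_contra hUopen
        obtain ⟨m, f, hf, hnot⟩ := key_nonopen hreg hω1 he hY U hUopen
        exact hnot (hall ⟨⟨m⟩, ⟨f, hf⟩⟩)
  exact hC.2 _ X _ tX q hq hsum

/-! ### `SCH A` is coreflective -/

theorem sch_sigma {A : TopClass.{u}} (ι : Type u) (X : ι → Type u)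
    (t : (i : ι) → TopologicalSpace (X i)) (h : ∀ i, SCH A (X i) (t i)) :
    SCH A ((i : ι) × X i) (@instTopologicalSpaceSigma ι X t) := by
  choose Y tY e hY he using h
  letI := t; letI := tY
  refine ⟨(i : ι) × Y i, instTopologicalSpaceSigma, Sigma.map id e,
    (ch_coreflective A).1 ι Y tY hY, ?_⟩
  exact (Topology.isEmbedding_sigmaMap Function.injective_id).mpr he

theorem sch_quotient {A : TopClass.{u}} {X Z : Type u} {tX : TopologicalSpace X}
    {tZ : TopologicalSpace Z} {q : X → Z} (hq : @Topology.IsQuotientMap X Z tX tZ q)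
    (hX : SCH A X tX) : SCH A Z tZ := by
  obtain ⟨Y, tY, e, hY, he⟩ := hX
  letI := tX; letI := tY; letI := tZ
  classical
  let r : Y → Y → Prop := fun y y' => y = y' ∨ ∃ x x', e x = y ∧ e x' = y' ∧ q x = q x'
  have requiv : Equivalence r := by
    constructor
    · intro y; exact Or.inl rfl
    · rintro y y' (rfl | ⟨x, x', hx, hx', hqq⟩)
      · exact Or.inl rfl
      · exact Or.inr ⟨x', x, hx', hx, hqq.symm⟩
    · rintro y y' y'' (rfl | ⟨x, x', hx, hx', hqq⟩) h2
      · exact h2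
      · rcases h2 with rfl | ⟨x2, x3, hx2, hx3, hqq2⟩
        · exact Or.inr ⟨x, x', hx, hx', hqq⟩
        · refine Or.inr ⟨x, x3, hx, hx3, ?_⟩
          have : x' = x2 := he.injective (hx'.trans hx2.symm)
          rw [hqq, this, hqq2]
  let s : Setoid Y := ⟨r, requiv⟩
  let W := Quotient s
  letI tW : TopologicalSpace W := tY.coinduced (Quotient.mk s)
  have hπ : @Topology.IsQuotientMap Y W tY tW (Quotient.mk s) :=
    ⟨⟨rfl⟩, Quotient.mk_surjective⟩
  have hW : CH A W tW := (ch_coreflective A).2 Y W tY tW _ hπ hY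
  let σ : Z → X := Function.surjInv hq.surjective
  have hσ : ∀ z, q (σ z) = z := Function.rightInverse_surjInv hq.surjective
  let j : Z → W := fun z => Quotient.mk s (e (σ z))
  have hmk : ∀ x, Quotient.mk s (e x) = j (q x) := by
    intro x
    refine Quotient.sound ?_
    exact Or.inr ⟨x, σ (q x), rfl, rfl, (hσ (q x)).symm⟩
  have hinj : Function.Injective j := by
    intro z z' hzz
    have hr : r (e (σ z)) (e (σ z')) := Quotient.exact hzz
    rcases hr with heq | ⟨x, x', hx, hx', hqq⟩
    · have : σ z = σ z' := he.injective heq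
      rw [← hσ z, this, hσ z']
    · have h1 : x = σ z := he.injective hx
      have h2 : x' = σ z' := he.injective hx'
      rw [← hσ z, ← h1, hqq, h2, hσ z']
  have hjcont : Continuous j := by
    rw [hq.continuous_iff]
    have : j ∘ q = (Quotient.mk s) ∘ e := funext fun x => (hmk x).symm
    rw [this]
    exact continuous_coinduced_rng.comp he.continuous
  refine ⟨W, tW, j, hW, ⟨⟨?_⟩, hinj⟩⟩
  refine le_antisymm (continuous_iff_le_induced.mp hjcont) ?_
  rw [TopologicalSpace.le_def]
  intro U hU
  have hqU : IsOpen (q ⁻¹' U) := hq.continuous.isOpen_preimage U hU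
  obtain ⟨V₀, hV₀, hpre⟩ := he.toIsInducing.isOpen_iff.mp hqU
  have hsat : (Quotient.mk s) ⁻¹' ((Quotient.mk s) '' V₀) = V₀ := by
    ext y
    simp only [Set.mem_preimage, Set.mem_image]
    constructor
    · rintro ⟨y', hy', hyy⟩
      have hr : r y' y := Quotient.exact hyy
      rcases hr with rfl | ⟨x, x', hx, hx', hqq⟩
      · exact hy'
      · have hx0 : x ∈ e ⁻¹' V₀ := by rw [← hx] at hy'; exact hy'
        rw [hpre] at hx0
        have : q x' ∈ U := hqq ▸ hx0
        have hx1 : x' ∈ e ⁻¹' V₀ := by rw [hpre]; exact this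
        rw [← hx']
        exact hx1
    · intro hy
      exact ⟨y, hy, rfl⟩
  have hVopen : tW.IsOpen ((Quotient.mk s) '' V₀) := by
    show tY.IsOpen ((Quotient.mk s) ⁻¹' ((Quotient.mk s) '' V₀))
    rw [hsat]
    exact hV₀
  have hjV : j ⁻¹' ((Quotient.mk s) '' V₀) = U := by
    ext z
    simp only [Set.mem_preimage, Set.mem_image]
    constructor
    · rintro ⟨y, hy, hyy⟩
      have hr : r y (e (σ z)) := Quotient.exact hyy
      rcases hr with rfl | ⟨x, x', hx, hx', hqq⟩
      · have : σ z ∈ e ⁻¹' V₀ := hy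
        rw [hpre] at this
        rw [← hσ z]
        exact this
      · have hx0 : x ∈ e ⁻¹' V₀ := by rw [← hx] at hy; exact hy
        rw [hpre] at hx0
        have hx'' : x' = σ z := he.injective hx'
        have : q x' ∈ U := hqq ▸ hx0
        rw [hx'', hσ z] at this
        exact this
    · intro hz
      refine ⟨e (σ z), ?_, rfl⟩
      have : σ z ∈ q ⁻¹' U := by rw [Set.mem_preimage, hσ z]; exact hz
      rw [← hpre] at this
      exact this
  exact ⟨(Quotient.mk s) '' V₀, hVopen, hjV⟩

/-! ### The full tree spaces `C(α,n)` -/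

/-- Non-root nodes of the tree of height `m+1`: a first coordinate in `K` together with either
the end (root of a subtree) or a further node. -/
def ND (K : Type u) : ℕ → Type u
  | 0 => K
  | m + 1 => K × Option (ND K m)

/-- Summands for building the tree space of height `m+2` out of `C(α)` and `K`-many copies
of the tree space of height `m+1`. -/
@[reducible] def NodeIdx (K : Type u) (m : ℕ) : Option K → Type u
  | none => Option (CIdx K 0)
  | some _ => Option (ND K m)

/-- The gluing map. -/
def nodeQ (K : Type u) (m : ℕ) : ((i : Option K) × NodeIdx K m i) → Option (ND K (m + 1))
  | ⟨none, none⟩ => none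
  | ⟨none, some ξ⟩ => some (ξ, none)
  | ⟨some ξ, y⟩ => some (ξ, y)

/-- The topology of the tree space. -/
def NodeT (K : Type u) [Infinite K] : (m : ℕ) → TopologicalSpace (Option (ND K m))
  | 0 => CTop K 0
  | m + 1 => TopologicalSpace.coinduced (nodeQ K m)
      (@instTopologicalSpaceSigma (Option K) (NodeIdx K m)
        (fun i => Option.casesOn (motive := fun i => TopologicalSpace (NodeIdx K m i)) i
          (CTop K 0) (fun _ => NodeT K m)))

/-- The family of topologies on the summands. -/
def nodeFamT (K : Type u) [Infinite K] (m : ℕ) :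
    (i : Option K) → TopologicalSpace (NodeIdx K m i) :=
  fun i => Option.casesOn (motive := fun i => TopologicalSpace (NodeIdx K m i)) i
    (CTop K 0) (fun _ => NodeT K m)

theorem nodeT_succ (K : Type u) [Infinite K] (m : ℕ) :
    NodeT K (m + 1) = TopologicalSpace.coinduced (nodeQ K m)
      (@instTopologicalSpaceSigma (Option K) (NodeIdx K m) (nodeFamT K m)) := rfl

theorem nodeQ_surjective (K : Type u) (m : ℕ) : Function.Surjective (nodeQ K m) := by
  intro z
  cases z with
  | none => exact ⟨⟨none, none⟩, rfl⟩
  | some p =>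
    obtain ⟨ξ, y⟩ := p
    exact ⟨⟨some ξ, y⟩, rfl⟩

theorem nodeT_isOpen_succ_iff (K : Type u) [Infinite K] (m : ℕ)
    (V : Set (Option (ND K (m + 1)))) :
    @IsOpen _ (NodeT K (m + 1)) V ↔
      ((none ∈ V → Cardinal.mk {ξ : K | (some (ξ, none) : Option (ND K (m+1))) ∉ V}
          < Cardinal.mk K) ∧
       ∀ ξ : K, @IsOpen _ (NodeT K m) {y : Option (ND K m) |
          (some (ξ, y) : Option (ND K (m+1))) ∈ V}) := by
  letI := nodeFamT K m
  have h0 : @IsOpen _ (NodeT K (m + 1)) V ↔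
      ∀ i : Option K, @IsOpen _ (nodeFamT K m i) (Sigma.mk i ⁻¹' (nodeQ K m ⁻¹' V)) :=
    isOpen_sigma_iff
  rw [h0, Option.forall]
  exact Iff.rfl

theorem node_mem_ch (K : Type u) [Infinite K] (m : ℕ) :
    CH (singleClass (Option (CIdx K 0)) (CTop K 0)) (Option (ND K m)) (NodeT K m) := by
  induction m with
  | zero =>
    exact ch_mem (A := singleClass (Option (CIdx K 0)) (CTop K 0))
      ⟨@Homeomorph.refl _ (CTop K 0)⟩
  | succ m ih =>
    have hsum := (ch_coreflective (singleClass (Option (CIdx K 0)) (CTop K 0))).1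
      (Option K) (NodeIdx K m) (nodeFamT K m)
      (fun i => by
        cases i with
        | none =>
          exact ch_mem (A := singleClass (Option (CIdx K 0)) (CTop K 0))
            ⟨@Homeomorph.refl _ (CTop K 0)⟩
        | some ξ => exact ih)
    exact (ch_coreflective (singleClass (Option (CIdx K 0)) (CTop K 0))).2
      ((i : Option K) × NodeIdx K m i) (Option (ND K (m+1)))
      (@instTopologicalSpaceSigma _ _ (nodeFamT K m)) (NodeT K (m+1)) (nodeQ K m)
      (@Topology.IsQuotientMap.mk _ _ (@instTopologicalSpaceSigma _ _ (nodeFamT K m))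
        (NodeT K (m+1)) (nodeQ K m) (@Topology.IsCoinducing.mk _ _ (@instTopologicalSpaceSigma _ _ (nodeFamT K m))
          (NodeT K (m+1)) (nodeQ K m) (nodeT_succ K m)) (nodeQ_surjective K m)) hsum

/-! ### The embedding of `C⁻(α,m+1)` into the tree space -/

def cemb (K : Type u) : (m : ℕ) → Option (CIdx K m) → Option (ND K m)
  | 0, z => z
  | _ + 1, none => none
  | m + 1, some p => some (p.1, cemb K m (some p.2))

theorem cemb_none (K : Type u) (m : ℕ) : cemb K m none = none := by
  cases m with
  | zero => rfl
  | succ m => rfl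

theorem cemb_some_ne (K : Type u) (m : ℕ) (x : CIdx K m) : cemb K m (some x) ≠ none := by
  cases m with
  | zero => exact fun h => Option.some_ne_none _ h
  | succ m => exact fun h => Option.some_ne_none _ h

theorem cemb_injective (K : Type u) (m : ℕ) : Function.Injective (cemb K m) := by
  induction m with
  | zero => exact fun a b h => h
  | succ m ih =>
    intro a b hab
    cases a with
    | none =>
      cases b with
      | none => rfl
      | some p => exact absurd ((cemb_some_ne K (m+1) p) hab.symm) (fun h => h)
    | some p =>
      cases b with
      | none => exact absurd ((cemb_some_ne K (m+1) p) hab) (fun h => h)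
      | some p' =>
        have h1 : (p.1, cemb K m (some p.2)) = (p'.1, cemb K m (some p'.2)) :=
          Option.some.inj hab
        have h2 : p.1 = p'.1 := (Prod.ext_iff.mp h1).1
        have h3 : cemb K m (some p.2) = cemb K m (some p'.2) := (Prod.ext_iff.mp h1).2
        have h4 : p.2 = p'.2 := Option.some.inj (ih h3)
        have : p = p' := Prod.ext h2 h4
        rw [this]

theorem cemb_eq_none_iff (K : Type u) (m : ℕ) (z : Option (CIdx K m)) :
    cemb K m z = none ↔ z = none := by
  cases z with
  | none => simp [cemb_none]
  | some x => simp [cemb_some_ne K m x]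

/-- Any set of leaves is open in the tree space. -/
theorem leaf_open (K : Type u) [Infinite K] :
    ∀ (m : ℕ) (S : Set (Option (ND K m))), none ∉ S →
      (∀ s ∈ S, ∃ x : CIdx K m, s = cemb K m (some x)) → @IsOpen _ (NodeT K m) S := by
  intro m
  induction m with
  | zero =>
    intro S hnone _
    exact (cisOpen_of_none_not_mem K 0 S hnone : CIsOpen K 0 S)
  | succ m ih =>
    intro S hnone hleaf
    rw [nodeT_isOpen_succ_iff]
    refine ⟨fun h => absurd h hnone, fun ξ => ?_⟩
    refine ih _ ?_ ?_
    · intro hc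
      obtain ⟨x, hx⟩ := hleaf _ hc
      have : (some (ξ, (none : Option (ND K m))) : Option (ND K (m+1)))
          = some (x.1, cemb K m (some x.2)) := hx
      have h2 := Option.some.inj this
      exact cemb_some_ne K m x.2 ((Prod.ext_iff.mp h2).2).symm
    · intro y hy
      obtain ⟨x, hx⟩ := hleaf _ hy
      have h2 := Option.some.inj hx
      exact ⟨x.2, (Prod.ext_iff.mp h2).2⟩

/-- The preimage under the canonical inclusion of an open set of the tree space is open. -/
theorem cemb_preimage_open (K : Type u) [Infinite K] :
    ∀ (m : ℕ) (V : Set (Option (ND K m))), @IsOpen _ (NodeT K m) V →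
      CIsOpen K m (cemb K m ⁻¹' V) := by
  intro m
  induction m with
  | zero => exact fun V h => h
  | succ m ih =>
    intro V hV
    rw [nodeT_isOpen_succ_iff] at hV
    obtain ⟨ha, hb⟩ := hV
    intro h0
    have h0' : none ∈ V := h0
    have hsub : ({ξ : K | CIsOpen K m (cslice (cemb K (m+1) ⁻¹' V) ξ)}ᶜ : Set K) ⊆
        {ξ : K | (some (ξ, none) : Option (ND K (m+1))) ∉ V} := by
      intro ξ hξ
      simp only [Set.mem_compl_iff, Set.mem_setOf_eq] at hξ ⊢
      intro hmem
      apply hξ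
      have hceq : cslice (cemb K (m+1) ⁻¹' V) ξ
          = cemb K m ⁻¹' {y : Option (ND K m) | (some (ξ, y) : Option (ND K (m+1))) ∈ V} := by
        ext z
        cases z with
        | none =>
          simp only [none_mem_cslice, Set.mem_preimage, cemb_none, Set.mem_setOf_eq, true_iff]
          exact hmem
        | some x =>
          rw [some_mem_cslice_iff]
          rfl
      rw [hceq]
      exact ih _ (hb ξ)
    exact lt_of_le_of_lt (Cardinal.mk_le_mk_of_subset hsub) (ha h0')

/-- Every open set of `C⁻(α,m+1)` is the trace of an open set of the tree space. -/
theorem cemb_extend (K : Type u) [Infinite K] :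
    ∀ (m : ℕ) (U : Set (Option (CIdx K m))), CIsOpen K m U →
      ∃ V : Set (Option (ND K m)), @IsOpen _ (NodeT K m) V ∧ cemb K m ⁻¹' V = U := by
  intro m
  induction m with
  | zero => exact fun U h => ⟨U, h, rfl⟩
  | succ m ih =>
    intro U hU
    classical
    by_cases h0 : none ∈ U
    · set G : Set K := {ξ : K | CIsOpen K m (cslice U ξ)} with hG
      choose! Vf hVf1 hVf2 using fun ξ (h : ξ ∈ G) => ih (cslice U ξ) h
      set V : Set (Option (ND K (m+1))) := insert none
        ({p | ∃ ξ ∈ G, ∃ y ∈ Vf ξ, p = (some (ξ, y) : Option (ND K (m+1)))} ∪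
         {p | ∃ ξ, ξ ∉ G ∧ ∃ x : CIdx K m, some (ξ, x) ∈ U ∧
            p = (some (ξ, cemb K m (some x)) : Option (ND K (m+1)))}) with hV
      have hVnone : (none : Option (ND K (m+1))) ∈ V := Set.mem_insert _ _
      have hmemV : ∀ (ξ : K) (y : Option (ND K m)),
          ((some (ξ, y) : Option (ND K (m+1))) ∈ V ↔
            ((ξ ∈ G ∧ y ∈ Vf ξ) ∨ (ξ ∉ G ∧ ∃ x : CIdx K m, some (ξ, x) ∈ U
              ∧ y = cemb K m (some x)))) := by
        intro ξ y
        simp only [hV, Set.mem_insert_iff, Set.mem_union, Set.mem_setOf_eq]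
        constructor
        · rintro (h | h | h)
          · exact absurd h (fun hc => by cases hc)
          · obtain ⟨ξ', hξ', y', hy', heq⟩ := h
            have h2 := Prod.ext_iff.mp (Option.some.inj heq)
            have h21 : ξ = ξ' := h2.1
            have h22 : y = y' := h2.2
            subst h21; subst h22
            exact Or.inl ⟨hξ', hy'⟩
          · obtain ⟨ξ', hξ', x, hx, heq⟩ := h
            have h2 := Prod.ext_iff.mp (Option.some.inj heq)
            have h21 : ξ = ξ' := h2.1
            have h22 : y = cemb K m (some x) := h2.2
            subst h21
            exact Or.inr ⟨hξ', x, hx, h22⟩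
        · rintro (⟨h1, h2⟩ | ⟨h1, x, hx, h2⟩)
          · exact Or.inr (Or.inl ⟨ξ, h1, y, h2, rfl⟩)
          · exact Or.inr (Or.inr ⟨ξ, h1, x, hx, by rw [h2]⟩)
      refine ⟨V, ?_, ?_⟩
      · rw [nodeT_isOpen_succ_iff]
        constructor
        · intro _
          have hsub : {ξ : K | (some (ξ, none) : Option (ND K (m+1))) ∉ V} ⊆ Gᶜ := by
            intro ξ hξ
            simp only [Set.mem_setOf_eq] at hξ
            intro hξG
            apply hξ
            rw [hmemV]
            refine Or.inl ⟨hξG, ?_⟩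
            have : (none : Option (CIdx K m)) ∈ cemb K m ⁻¹' (Vf ξ) := by
              rw [hVf2 ξ hξG]
              exact none_mem_cslice U ξ
            rw [Set.mem_preimage, cemb_none] at this
            exact this
          exact lt_of_le_of_lt (Cardinal.mk_le_mk_of_subset hsub) (hU h0)
        · intro ξ
          by_cases hξG : ξ ∈ G
          · have heq : {y : Option (ND K m) | (some (ξ, y) : Option (ND K (m+1))) ∈ V}
                = Vf ξ := by
              ext y
              rw [Set.mem_setOf_eq, hmemV]
              constructor
              · rintro (⟨_, h⟩ | ⟨h, _⟩)
                · exact h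
                · exact absurd hξG h
              · intro h
                exact Or.inl ⟨hξG, h⟩
            rw [heq]
            exact hVf1 ξ hξG
          · have heq : {y : Option (ND K m) | (some (ξ, y) : Option (ND K (m+1))) ∈ V}
                = {y | ∃ x : CIdx K m, some (ξ, x) ∈ U ∧ y = cemb K m (some x)} := by
              ext y
              rw [Set.mem_setOf_eq, hmemV]
              constructor
              · rintro (⟨h, _⟩ | ⟨_, h⟩)
                · exact absurd h hξG
                · exact h
              · intro h
                exact Or.inr ⟨hξG, h⟩
            rw [heq]
            refine leaf_open K m _ ?_ ?_
            · rintro ⟨x, _, hx⟩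
              exact cemb_some_ne K m x hx.symm
            · rintro s ⟨x, _, hx⟩
              exact ⟨x, hx⟩
      · ext z
        cases z with
        | none =>
          simp only [Set.mem_preimage]
          rw [cemb_none]
          exact ⟨fun _ => h0, fun _ => hVnone⟩
        | some p =>
          simp only [Set.mem_preimage]
          have hc : cemb K (m+1) (some p) = (some (p.1, cemb K m (some p.2))
              : Option (ND K (m+1))) := rfl
          rw [hc, hmemV]
          constructor
          · rintro (⟨h1, h2⟩ | ⟨h1, x, hx, h2⟩)
            · have : some p.2 ∈ cemb K m ⁻¹' (Vf p.1) := h2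
              rw [hVf2 p.1 h1] at this
              exact (some_mem_cslice_iff U p.1 p.2).mp this
            · have h3 : p.2 = x := Option.some.inj (cemb_injective K m h2)
              rw [← h3] at hx
              exact hx
          · intro hp
            by_cases h1 : p.1 ∈ G
            · refine Or.inl ⟨h1, ?_⟩
              have : some p.2 ∈ cslice U p.1 := (some_mem_cslice_iff U p.1 p.2).mpr hp
              rw [← hVf2 p.1 h1] at this
              exact this
            · exact Or.inr ⟨h1, p.2, hp, rfl⟩
    · refine ⟨cemb K (m+1) '' U, ?_, Set.preimage_image_eq U (cemb_injective K (m+1))⟩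
      refine leaf_open K (m+1) _ ?_ ?_
      · rintro ⟨z, hz, hznone⟩
        rw [cemb_eq_none_iff] at hznone
        rw [hznone] at hz
        exact h0 hz
      · rintro s ⟨z, hz, rfl⟩
        cases z with
        | none => exact absurd hz h0
        | some x => exact ⟨x, rfl⟩

/-- The canonical inclusion of `C⁻(α,m+1)` into the tree space is an embedding. -/
theorem cemb_isEmbedding (K : Type u) [Infinite K] (m : ℕ) :
    @Topology.IsEmbedding _ _ (CTop K m) (NodeT K m) (cemb K m) := by
  refine @Topology.IsEmbedding.mk _ _ (CTop K m) (NodeT K m) _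
    (@Topology.IsInducing.mk _ _ (CTop K m) (NodeT K m) _
      (TopologicalSpace.ext_iff.mpr (fun U => ?_))) (cemb_injective K m)
  rw [@isOpen_induced_iff _ _ (NodeT K m) U (cemb K m)]
  constructor
  · intro h
    exact cemb_extend K m U h
  · rintro ⟨V, hV, rfl⟩
    exact cemb_preimage_open K m V hV

/-! ### Backward direction -/

theorem backward_dir (K : Type u) [Infinite K] {X : Type u} {tX : TopologicalSpace X}
    (hF : CH (fun Y tY => ∃ m : ℕ, Nonempty (@Homeomorph Y (Option (CIdx K m)) tY (CTop K m)))
      X tX) : SCH (singleClass (Option (CIdx K 0)) (CTop K 0)) X tX := by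
  refine hF (SCH (singleClass (Option (CIdx K 0)) (CTop K 0)))
    ⟨fun ι Z t h => sch_sigma ι Z t h,
     fun X Y tX tY f hf h => sch_quotient hf h⟩ ?_
  rintro Y tY ⟨m, ⟨φ⟩⟩
  letI := tY
  letI := NodeT K m
  exact ⟨Option (ND K m), NodeT K m, cemb K m ∘ φ, node_mem_ch K m,
    Topology.IsEmbedding.comp (cemb_isEmbedding K m) φ.isEmbedding⟩

/-- for a regular cardinal `α ≥ ω₁` (realized as the cardinality of the infinite
type `K`), `SCH {C(α)} = CH {C⁻(α,n) : 0 < n < ω}`.  Here `CTop K m` is the space `C⁻(α, m+1)`,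
so `CTop K 0 = C(α)` and the family `{CTop K m : m ∈ ℕ}` is `{C⁻(α,n) : 0 < n < ω}`. -/
theorem stmt10 (K : Type u) [Infinite K] (hreg : (Cardinal.mk K).IsRegular)
    (hω1 : Cardinal.aleph 1 ≤ Cardinal.mk K)
    (X : Type u) (tX : TopologicalSpace X) :
    SCH (singleClass (Option (CIdx K 0)) (CTop K 0)) X tX ↔
      CH (fun Y tY => ∃ m : ℕ, Nonempty (@Homeomorph Y (Option (CIdx K m)) tY (CTop K m)))
        X tX := by
  exact ⟨fun h => forward_dir hreg hω1 h, fun h => backward_dir K h⟩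
end
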